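/- Let M ∈ SL(2,ℤ). Then trace(M) > 2 if and only if there exist C ∈ SL(2,ℤ), an integer k ≥ 1, and positive integers a₁, b₁, …, a_k, b_k such that C M C⁻¹ = L^{a₁} R^{b₁} ⋯ L^{a_k} R^{b_k}. -/

import Mathlib

open Matrix

/-- `L = (1 1; 0 1)` as an element of `SL(2, ℤ)`. -/
noncomputable def Lmat : Matrix.SpecialLinearGroup (Fin 2) ℤ :=
  ⟨!![1, 1; 0, 1], by norm_num [Matrix.det_fin_two_of]⟩

/-- `R = (1 0; 1 1)` as an element of `SL(2, ℤ)`. -/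
noncomputable def Rmat : Matrix.SpecialLinearGroup (Fin 2) ℤ :=
  ⟨!![1, 0; 1, 1], by norm_num [Matrix.det_fin_two_of]⟩

abbrev SL2 := Matrix.SpecialLinearGroup (Fin 2) ℤ
lemma entry_mul (A B : SL2) (i j : Fin 2) :
    (A * B).1 i j = A.1 i 0 * B.1 0 j + A.1 i 1 * B.1 1 j := by
  simp [Matrix.SpecialLinearGroup.coe_mul, Matrix.mul_apply, Fin.sum_univ_two]
lemma det_entries (A : SL2) : A.1 0 0 * A.1 1 1 - A.1 0 1 * A.1 1 0 = 1 := by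
  have := A.2; rw [Matrix.det_fin_two] at this; linarith
lemma Lpow (n : ℕ) : (Lmat ^ n).1 = !![1, (n:ℤ); 0, 1] := by
  induction n with
  | zero => ext i j; fin_cases i <;> fin_cases j <;> simp [Matrix.SpecialLinearGroup.coe_one]
  | succ n ih =>
    rw [pow_succ, Matrix.SpecialLinearGroup.coe_mul, ih]
    show (!![1, (n:ℤ); 0, 1] : Matrix (Fin 2) (Fin 2) ℤ) * !![1,1;0,1] = _
    rw [Matrix.mul_fin_two]; norm_num [add_comm]
lemma Rpow (n : ℕ) : (Rmat ^ n).1 = !![1, 0; (n:ℤ), 1] := by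
  induction n with
  | zero => ext i j; fin_cases i <;> fin_cases j <;> simp [Matrix.SpecialLinearGroup.coe_one]
  | succ n ih =>
    rw [pow_succ, Matrix.SpecialLinearGroup.coe_mul, ih]
    show (!![1, 0; (n:ℤ), 1] : Matrix (Fin 2) (Fin 2) ℤ) * !![1,0;1,1] = _
    rw [Matrix.mul_fin_two]; norm_num

noncomputable def letter (t : Bool) : SL2 := if t then Lmat else Rmat

noncomputable def wprod (w : List Bool) : SL2 := (w.map letter).prod

lemma wprod_nil : wprod [] = 1 := rfl

lemma wprod_cons (x : Bool) (w : List Bool) : wprod (x :: w) = letter x * wprod w := by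
  simp [wprod]

lemma wprod_append (u v : List Bool) : wprod (u ++ v) = wprod u * wprod v := by
  simp [wprod]

lemma wprod_replicate_true (n : ℕ) : wprod (List.replicate n true) = Lmat ^ n := by
  simp [wprod, letter]

lemma wprod_replicate_false (n : ℕ) : wprod (List.replicate n false) = Rmat ^ n := by
  simp [wprod, letter]

def PosM (A : SL2) : Prop :=
  2 ≤ A.1 0 0 ∧ 1 ≤ A.1 0 1 ∧ 1 ≤ A.1 1 0 ∧ 1 ≤ A.1 1 1

lemma posM_block (a b : ℕ) (ha : 0 < a) (hb : 0 < b) : PosM (Lmat ^ a * Rmat ^ b) := by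
  have h := fun i j => entry_mul (Lmat ^ a) (Rmat ^ b) i j
  simp only [Lpow, Rpow] at h
  have ha' : (1:ℤ) ≤ a := by exact_mod_cast ha
  have hb' : (1:ℤ) ≤ b := by exact_mod_cast hb
  refine ⟨?_, ?_, ?_, ?_⟩ <;> rw [h] <;> norm_num <;> nlinarith

lemma posM_mul {A B : SL2} (hA : PosM A) (hB : PosM B) : PosM (A * B) := by
  obtain ⟨a1, a2, a3, a4⟩ := hA
  obtain ⟨b1, b2, b3, b4⟩ := hB
  refine ⟨?_, ?_, ?_, ?_⟩ <;> rw [entry_mul] <;> nlinarith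

lemma posM_prod : ∀ (l : List SL2), l ≠ [] → (∀ x ∈ l, PosM x) → PosM l.prod := by
  intro l
  induction l with
  | nil => simp
  | cons x xs ih =>
    intro _ hall
    rcases eq_or_ne xs [] with h | h
    · simp [h, hall x (by simp)]
    · rw [List.prod_cons]
      exact posM_mul (hall x (by simp)) (ih h (fun y hy => hall y (by simp [hy])))

lemma nonneg_word : ∀ s : ℕ, ∀ N : SL2, 0 ≤ N.1 0 0 → 0 ≤ N.1 0 1 → 0 ≤ N.1 1 0 →
    0 ≤ N.1 1 1 → (N.1 0 0 + N.1 0 1 + N.1 1 0 + N.1 1 1).toNat = s →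
    ∃ w : List Bool, wprod w = N := by
  intro s
  induction s using Nat.strong_induction_on with
  | _ s ih =>
  intro N ha hb hc hd hs
  have hdet := det_entries N
  rcases eq_or_ne (N.1 1 0) 0 with h0 | h0
  · -- c = 0 : N = L^b
    have had : N.1 0 0 * N.1 1 1 = 1 := by rw [h0] at hdet; linarith
    have ha1 : N.1 0 0 = 1 := Int.eq_one_of_mul_eq_one_right ha had
    have hd1 : N.1 1 1 = 1 := Int.eq_one_of_mul_eq_one_left hd had
    refine ⟨List.replicate (N.1 0 1).toNat true, ?_⟩
    rw [wprod_replicate_true]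
    apply Subtype.ext
    rw [Lpow]
    ext i j
    fin_cases i <;> fin_cases j <;>
      simp [ha1, hd1, h0, Int.toNat_of_nonneg hb]
  · rcases eq_or_ne (N.1 0 1) 0 with h1 | h1
    · -- b = 0 : N = R^c
      have had : N.1 0 0 * N.1 1 1 = 1 := by rw [h1] at hdet; linarith
      have ha1 : N.1 0 0 = 1 := Int.eq_one_of_mul_eq_one_right ha had
      have hd1 : N.1 1 1 = 1 := Int.eq_one_of_mul_eq_one_left hd had
      refine ⟨List.replicate (N.1 1 0).toNat false, ?_⟩
      rw [wprod_replicate_false]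
      apply Subtype.ext
      rw [Rpow]
      ext i j
      fin_cases i <;> fin_cases j <;>
        simp [ha1, hd1, h1, Int.toNat_of_nonneg hc]
    · -- all entries ≥ 1
      have hb1 : 1 ≤ N.1 0 1 := lt_of_le_of_ne hb (Ne.symm h1)
      have hc1 : 1 ≤ N.1 1 0 := lt_of_le_of_ne hc (Ne.symm h0)
      have ha1 : 1 ≤ N.1 0 0 := by nlinarith
      have hd1 : 1 ≤ N.1 1 1 := by nlinarith
      by_cases hrow : N.1 1 0 ≤ N.1 0 0 ∧ N.1 1 1 ≤ N.1 0 1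
      · -- N = L * N'
        obtain ⟨hr1, hr2⟩ := hrow
        have hdet' : (!![N.1 0 0 - N.1 1 0, N.1 0 1 - N.1 1 1; N.1 1 0, N.1 1 1] :
            Matrix (Fin 2) (Fin 2) ℤ).det = 1 := by
          rw [Matrix.det_fin_two_of]; linarith
        set N' : SL2 := ⟨_, hdet'⟩ with hN'
        have hmul : Lmat * N' = N := by
          apply Subtype.ext
          ext i j
          fin_cases i <;> fin_cases j <;>
            rw [entry_mul] <;> simp [Lmat, hN'] <;> ring
        obtain ⟨w, hw⟩ := ih (N'.1 0 0 + N'.1 0 1 + N'.1 1 0 + N'.1 1 1).toNat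
          (by simp [hN']; omega) N' (by simp [hN']; omega) (by simp [hN']; omega)
          (by simp [hN']; omega) (by simp [hN']; omega) rfl
        exact ⟨true :: w, by rw [wprod_cons, hw]; simpa [letter] using hmul⟩
      · -- N = R * N'
        have hrow2 : N.1 0 0 ≤ N.1 1 0 ∧ N.1 0 1 ≤ N.1 1 1 := by
          rcases not_and_or.1 hrow with h | h
          · push_neg at h
            refine ⟨le_of_lt h, ?_⟩
            nlinarith
          · push_neg at h
            refine ⟨?_, le_of_lt h⟩
            nlinarith
        obtain ⟨hr1, hr2⟩ := hrow2
        have hdet' : (!![N.1 0 0, N.1 0 1; N.1 1 0 - N.1 0 0, N.1 1 1 - N.1 0 1] :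
            Matrix (Fin 2) (Fin 2) ℤ).det = 1 := by
          rw [Matrix.det_fin_two_of]; linarith
        set N' : SL2 := ⟨_, hdet'⟩ with hN'
        have hmul : Rmat * N' = N := by
          apply Subtype.ext
          ext i j
          fin_cases i <;> fin_cases j <;>
            rw [entry_mul] <;> simp [Rmat, hN'] <;> ring
        obtain ⟨w, hw⟩ := ih (N'.1 0 0 + N'.1 0 1 + N'.1 1 0 + N'.1 1 1).toNat
          (by simp [hN']; omega) N' (by simp [hN']; omega) (by simp [hN']; omega)
          (by simp [hN']; omega) (by simp [hN']; omega) rfl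
        exact ⟨false :: w, by rw [wprod_cons, hw]; simpa [letter] using hmul⟩
lemma runs (w₀ : List Bool) : ∃ k : ℕ, ∃ a b : Fin (k+1) → ℕ,
    (∀ i, 0 < b i) ∧ (∀ i, i ≠ 0 → 0 < a i) ∧
    (∀ w', w₀ ++ [false] = true :: w' → 0 < a 0) ∧
    wprod (w₀ ++ [false]) = (List.ofFn fun i => Lmat ^ a i * Rmat ^ b i).prod := by
  induction w₀ with
  | nil =>
    refine ⟨0, fun _ => 0, fun _ => 1, fun i => one_pos,
      fun i h => absurd (Fin.ext (by omega)) h, fun w' h => by simp at h, ?_⟩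
    simp [wprod_cons, wprod_nil, letter]
  | cons x w₀ ih =>
    obtain ⟨k, a, b, hbpos, hapos, hhead, hw⟩ := ih
    cases x with
    | true =>
      refine ⟨k, (fun i => if i = 0 then a 0 + 1 else a i), b, hbpos, ?_,
        fun _ _ => by simp, ?_⟩
      · intro i hi
        simp only [if_neg hi]
        exact hapos i hi
      · have key : (List.ofFn fun i : Fin (k+1) =>
            Lmat ^ (if i = 0 then a 0 + 1 else a i) * Rmat ^ b i).prod
            = Lmat * (List.ofFn fun i => Lmat ^ a i * Rmat ^ b i).prod := by
          rw [List.ofFn_succ, List.ofFn_succ, List.prod_cons, List.prod_cons]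
          simp only [Fin.succ_ne_zero, if_neg, ite_true, ite_false]
          rw [pow_succ']
          group
        rw [key, List.cons_append, wprod_cons, hw]
        rfl
    | false =>
      by_cases ha0 : a 0 = 0
      · refine ⟨k, a, (fun i => if i = 0 then b 0 + 1 else b i), ?_, hapos,
          fun w' h => by simp at h, ?_⟩
        · intro i
          by_cases h : i = 0
          · simp [h]
          · simpa [h] using hbpos i
        · have key : (List.ofFn fun i : Fin (k+1) =>
              Lmat ^ a i * Rmat ^ (if i = 0 then b 0 + 1 else b i)).prod
              = Rmat * (List.ofFn fun i => Lmat ^ a i * Rmat ^ b i).prod := by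
            rw [List.ofFn_succ, List.ofFn_succ, List.prod_cons, List.prod_cons]
            simp only [Fin.succ_ne_zero, if_neg, ite_true, ite_false, ha0, pow_zero, one_mul]
            rw [pow_succ']
            group
          rw [key, List.cons_append, wprod_cons, hw]
          rfl
      · refine ⟨k + 1, Fin.cons 0 a, Fin.cons 1 b, ?_, ?_,
          fun w' h => by simp at h, ?_⟩
        · intro i
          refine Fin.cases ?_ ?_ i
          · simp
          · intro j; simp [hbpos j]
        · intro i hi
          refine Fin.cases (fun h => absurd rfl h) ?_ i hi
          · intro j _
            simp only [Fin.cons_succ]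
            rcases eq_or_ne j 0 with rfl | hj
            · omega
            · exact hapos j hj
        · have key : (List.ofFn fun i : Fin (k+2) =>
              Lmat ^ (Fin.cons 0 a : Fin (k+2) → ℕ) i * Rmat ^ (Fin.cons 1 b : Fin (k+2) → ℕ) i).prod
              = Rmat * (List.ofFn fun i => Lmat ^ a i * Rmat ^ b i).prod := by
            rw [List.ofFn_succ, List.prod_cons]
            simp [Fin.cons_zero, Fin.cons_succ]
          rw [key, List.cons_append, wprod_cons, hw]
          rfl
def IsConjTo (M N : SL2) : Prop := ∃ C : SL2, C * M * C⁻¹ = N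

lemma isConjTo_refl (M : SL2) : IsConjTo M M := ⟨1, by group⟩

lemma isConjTo_trans {M N P : SL2} (h1 : IsConjTo M N) (h2 : IsConjTo N P) :
    IsConjTo M P := by
  obtain ⟨C1, hC1⟩ := h1
  obtain ⟨C2, hC2⟩ := h2
  exact ⟨C2 * C1, by rw [← hC2, ← hC1]; group⟩

lemma isConjTo_rot (u v : List Bool) :
    IsConjTo (wprod (u ++ v)) (wprod (v ++ u)) := by
  refine ⟨(wprod u)⁻¹, ?_⟩
  rw [wprod_append, wprod_append]
  group

lemma first_true : ∀ z : List Bool, true ∈ z →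
    ∃ q r : List Bool, z = q ++ true :: r ∧ ∀ x ∈ q, x = false := by
  intro z
  induction z with
  | nil => intro h; simp at h
  | cons x z ih =>
    intro h
    cases x with
    | true => exact ⟨[], z, rfl, by simp⟩
    | false =>
      have hz : true ∈ z := by simpa using h
      obtain ⟨q, r, hqr, hq⟩ := ih hz
      refine ⟨false :: q, r, by simp [hqr], ?_⟩
      intro x hx
      rcases List.mem_cons.1 hx with rfl | hx
      · rfl
      · exact hq x hx

noncomputable def Smat : SL2 := ⟨!![0,-1;1,0], by norm_num [Matrix.det_fin_two_of]⟩

noncomputable def Tmat (n : ℤ) : SL2 := ⟨!![1,n;0,1], by norm_num [Matrix.det_fin_two_of]⟩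

lemma inv_entries (A : SL2) :
    (A⁻¹).1 = !![A.1 1 1, -A.1 0 1; -A.1 1 0, A.1 0 0] := by
  rw [Matrix.SpecialLinearGroup.SL2_inv_expl]
  ext i j
  fin_cases i <;> fin_cases j <;> rfl

lemma Smat_inv : (Smat⁻¹).1 = !![0, 1; -1, 0] := by
  rw [inv_entries]
  norm_num [Smat]

lemma Tmat_inv (n : ℤ) : ((Tmat n)⁻¹).1 = !![1, -n; 0, 1] := by
  rw [inv_entries]
  norm_num [Tmat]

lemma Sconj (N : SL2) :
    (Smat * N * Smat⁻¹).1 = !![N.1 1 1, -(N.1 1 0); -(N.1 0 1), N.1 0 0] := by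
  rw [Matrix.SpecialLinearGroup.coe_mul, Matrix.SpecialLinearGroup.coe_mul, Smat_inv,
    Matrix.eta_fin_two N.1]
  show (!![0,-1;1,0] : Matrix (Fin 2) (Fin 2) ℤ) * _ * _ = _
  rw [Matrix.mul_fin_two, Matrix.mul_fin_two]
  ext i j
  fin_cases i <;> fin_cases j <;> simp <;> ring

lemma Tconj (n : ℤ) (N : SL2) :
    (Tmat n * N * (Tmat n)⁻¹).1 =
      !![N.1 0 0 + n * N.1 1 0,
         N.1 0 1 + n * (N.1 1 1 - N.1 0 0) - n^2 * N.1 1 0;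
         N.1 1 0, N.1 1 1 - n * N.1 1 0] := by
  rw [Matrix.SpecialLinearGroup.coe_mul, Matrix.SpecialLinearGroup.coe_mul, Tmat_inv,
    Matrix.eta_fin_two N.1]
  show (!![1,n;0,1] : Matrix (Fin 2) (Fin 2) ℤ) * _ * _ = _
  rw [Matrix.mul_fin_two, Matrix.mul_fin_two]
  ext i j
  fin_cases i <;> fin_cases j <;> simp <;> ring

lemma trace_conj (C M : SL2) :
    ((C * M * C⁻¹ : SL2)).1 0 0 + (C * M * C⁻¹ : SL2).1 1 1 = M.1 0 0 + M.1 1 1 := by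
  have : Matrix.trace ((C * M * C⁻¹ : SL2) : Matrix (Fin 2) (Fin 2) ℤ)
      = Matrix.trace (M : Matrix (Fin 2) (Fin 2) ℤ) := by
    rw [Matrix.SpecialLinearGroup.coe_mul, Matrix.SpecialLinearGroup.coe_mul,
      Matrix.trace_mul_comm, ← Matrix.SpecialLinearGroup.coe_mul,
      ← Matrix.SpecialLinearGroup.coe_mul, inv_mul_cancel_left]
  simpa [Matrix.trace_fin_two] using this

lemma int_shift (e c : ℤ) (hc : c ≠ 0) : ∃ n : ℤ, |e - 2*n*c| ≤ |c| := by
  have hc' : 0 < |c| := abs_pos.2 hc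
  have h2c : 0 < 2 * |c| := by linarith
  have hqr := Int.mul_ediv_add_emod e (2 * |c|)
  have hr0 : 0 ≤ e % (2 * |c|) := Int.emod_nonneg e (by positivity)
  have hr1 : e % (2 * |c|) < 2 * |c| := Int.emod_lt_of_pos e h2c
  set q := e / (2 * |c|) with hq
  set r := e % (2 * |c|) with hr
  rcases abs_choice c with hac | hac
  · rw [hac] at hqr h2c hr1 ⊢
    rcases le_or_gt r c with h | h
    · exact ⟨q, by rw [abs_le]; constructor <;> nlinarith⟩
    · exact ⟨q + 1, by rw [abs_le]; constructor <;> nlinarith⟩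
  · rw [hac] at hqr h2c hr1 ⊢
    rcases le_or_gt r (-c) with h | h
    · exact ⟨-q, by rw [abs_le]; constructor <;> nlinarith⟩
    · exact ⟨-(q + 1), by rw [abs_le]; constructor <;> nlinarith⟩
lemma pos_of_bc (N : SL2) (hT : 3 ≤ N.1 0 0 + N.1 1 1) (hb : 1 ≤ N.1 0 1)
    (hc : 1 ≤ N.1 1 0) : 1 ≤ N.1 0 0 ∧ 1 ≤ N.1 1 1 := by
  have hdet := det_entries N
  constructor
  · by_contra h
    push_neg at h
    nlinarith
  · by_contra h
    push_neg at h
    nlinarith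

set_option maxHeartbeats 1000000 in
lemma step1 (M : SL2) (ht : 3 ≤ M.1 0 0 + M.1 1 1) :
    ∃ N, IsConjTo M N ∧ 1 ≤ N.1 0 0 ∧ 1 ≤ N.1 0 1 ∧ 1 ≤ N.1 1 0 ∧ 1 ≤ N.1 1 1 := by
  have htr : ∀ N : SL2, IsConjTo M N → N.1 0 0 + N.1 1 1 = M.1 0 0 + M.1 1 1 := by
    rintro N ⟨C, rfl⟩
    exact trace_conj C M
  have hcne : ∀ N : SL2, IsConjTo M N → N.1 1 0 ≠ 0 := by
    intro N hN h0
    have hdet := det_entries N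
    rw [h0] at hdet
    have had : N.1 0 0 * N.1 1 1 = 1 := by linarith
    have htrN := htr N hN
    rcases Int.mul_eq_one_iff_eq_one_or_neg_one.1 had with ⟨h1, h2⟩ | ⟨h1, h2⟩ <;> omega
  have hSconj : ∀ N : SL2, IsConjTo M N → IsConjTo M (Smat * N * Smat⁻¹) :=
    fun N hN => isConjTo_trans hN ⟨Smat, rfl⟩
  have hbne : ∀ N : SL2, IsConjTo M N → N.1 0 1 ≠ 0 := by
    intro N hN h0
    have h := hcne _ (hSconj N hN)
    rw [Sconj] at h
    simp [h0] at h
  set S : Set ℕ := {n | ∃ N : SL2, IsConjTo M N ∧ (N.1 1 0).natAbs = n} with hS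
  have hSne : S.Nonempty := ⟨(M.1 1 0).natAbs, M, isConjTo_refl M, rfl⟩
  obtain ⟨N, hN, hmN⟩ := Nat.sInf_mem hSne
  have hmin : ∀ N' : SL2, IsConjTo M N' → sInf S ≤ (N'.1 1 0).natAbs :=
    fun N' h => Nat.sInf_le ⟨N', h, rfl⟩
  obtain ⟨n, hn⟩ := int_shift (N.1 1 1 - N.1 0 0) (N.1 1 0) (hcne N hN)
  set N' := Tmat n * N * (Tmat n)⁻¹ with hN'
  have hNconj : IsConjTo M N' := isConjTo_trans hN ⟨Tmat n, rfl⟩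
  have hT := Tconj n N
  rw [← hN'] at hT
  have hc' : N'.1 1 0 = N.1 1 0 := by rw [hT]; simp
  have ha' : N'.1 0 0 = N.1 0 0 + n * N.1 1 0 := by rw [hT]; simp
  have hd' : N'.1 1 1 = N.1 1 1 - n * N.1 1 0 := by rw [hT]; simp
  have hda : |N'.1 1 1 - N'.1 0 0| ≤ |N'.1 1 0| := by
    rw [ha', hd', hc']
    have heq : N.1 1 1 - n * N.1 1 0 - (N.1 0 0 + n * N.1 1 0)
        = N.1 1 1 - N.1 0 0 - 2 * n * N.1 1 0 := by ring
    rw [heq]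
    exact hn
  have hmc : (N'.1 1 0).natAbs = sInf S := by rw [hc']; exact hmN
  have hble : (N'.1 1 0).natAbs ≤ (N'.1 0 1).natAbs := by
    rw [hmc]
    have h1 := hmin _ (hSconj N' hNconj)
    have h2 : (Smat * N' * Smat⁻¹).1 1 0 = -(N'.1 0 1) := by rw [Sconj]; simp
    rwa [h2, Int.natAbs_neg] at h1
  have hbleZ : |N'.1 1 0| ≤ |N'.1 0 1| := by
    rw [Int.abs_eq_natAbs, Int.abs_eq_natAbs]
    exact_mod_cast hble
  have hdet' := det_entries N'
  have htr' : N'.1 0 0 + N'.1 1 1 = M.1 0 0 + M.1 1 1 := htr _ hNconj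
  have hbne' := hbne _ hNconj
  have hcne' := hcne _ hNconj
  have hT3 : 3 ≤ N'.1 0 0 + N'.1 1 1 := by omega
  have hpos : 0 < N'.1 0 1 * N'.1 1 0 := by
    by_contra hnp
    push_neg at hnp
    have hlt : N'.1 0 1 * N'.1 1 0 < 0 := lt_of_le_of_ne hnp (mul_ne_zero hbne' hcne')
    have habs : -(N'.1 0 1 * N'.1 1 0) = |N'.1 0 1| * |N'.1 1 0| := by
      rw [← abs_mul, abs_of_neg hlt]
    have h2 : (N'.1 1 1 - N'.1 0 0)^2 ≤ (N'.1 1 0)^2 := by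
      have h := sq_le_sq' (abs_le.1 hda).1 (abs_le.1 hda).2
      rwa [sq_abs] at h
    have h3 : |N'.1 1 0| * |N'.1 1 0| ≤ |N'.1 0 1| * |N'.1 1 0| :=
      mul_le_mul_of_nonneg_right hbleZ (abs_nonneg _)
    have X : N'.1 1 0 * N'.1 1 0 ≤ -(N'.1 0 1 * N'.1 1 0) := by
      rw [habs]
      calc N'.1 1 0 * N'.1 1 0 = |N'.1 1 0| * |N'.1 1 0| := (abs_mul_abs_self _).symm
        _ ≤ |N'.1 0 1| * |N'.1 1 0| := h3
    have hcc : 1 ≤ N'.1 1 0 * N'.1 1 0 := by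
      rcases lt_or_gt_of_ne hcne' with h | h <;> nlinarith
    have htrsq : (N'.1 0 0 + N'.1 1 1)^2 = (M.1 0 0 + M.1 1 1)^2 := by rw [htr']
    have hM9 : 9 ≤ (M.1 0 0 + M.1 1 1)^2 := by nlinarith
    linarith [h2, X, hdet', htrsq, hM9, hcc]
  rcases mul_pos_iff.1 hpos with ⟨hb1, hc1⟩ | ⟨hb1, hc1⟩
  · obtain ⟨hA, hD⟩ := pos_of_bc N' hT3 hb1 hc1
    exact ⟨N', hNconj, hA, hb1, hc1, hD⟩
  · set N'' := Smat * N' * Smat⁻¹ with hN''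
    have hconj'' : IsConjTo M N'' := hSconj _ hNconj
    have hSc := Sconj N'
    rw [← hN''] at hSc
    have hb'' : 1 ≤ N''.1 0 1 := by rw [hSc]; simp; omega
    have hc'' : 1 ≤ N''.1 1 0 := by rw [hSc]; simp; omega
    have hT3'' : 3 ≤ N''.1 0 0 + N''.1 1 1 := by
      have := htr _ hconj''
      omega
    obtain ⟨hA, hD⟩ := pos_of_bc N'' hT3'' hb'' hc''
    exact ⟨N'', hconj'', hA, hb'', hc'', hD⟩

/-- A matrix `M ∈ SL(2, ℤ)` has trace `> 2` iff it is conjugate in `SL(2, ℤ)` to a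
product `L^{a₁} R^{b₁} ⋯ L^{a_k} R^{b_k}` with `k ≥ 1` and all `aᵢ, bᵢ` positive. -/
theorem stmt_1 (M : Matrix.SpecialLinearGroup (Fin 2) ℤ) :
    Matrix.trace (M : Matrix (Fin 2) (Fin 2) ℤ) > 2 ↔
      ∃ (C : Matrix.SpecialLinearGroup (Fin 2) ℤ) (k : ℕ), 1 ≤ k ∧
        ∃ a b : Fin k → ℕ, (∀ i, 0 < a i) ∧ (∀ i, 0 < b i) ∧
          C * M * C⁻¹ = (List.ofFn fun i => Lmat ^ (a i) * Rmat ^ (b i)).prod := by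
  constructor
  · intro h
    have ht : 3 ≤ M.1 0 0 + M.1 1 1 := by
      have h2 : (2:ℤ) < M.1 0 0 + M.1 1 1 := by
        simpa [Matrix.trace_fin_two] using h
      omega
    obtain ⟨N, hconj, hA, hB, hC, hD⟩ := step1 M ht
    obtain ⟨w, hw⟩ := nonneg_word (N.1 0 0 + N.1 0 1 + N.1 1 0 + N.1 1 1).toNat N
      (by omega) (by omega) (by omega) (by omega) rfl
    have htrue : true ∈ w := by
      by_contra hmem
      have hall : ∀ x ∈ w, x = false := by
        intro x hx
        cases x
        · rfl
        · exact absurd hx hmem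
      have hrep : w = List.replicate w.length false := List.eq_replicate_length.2 hall
      rw [hrep, wprod_replicate_false] at hw
      have : N.1 0 1 = 0 := by rw [← hw, Rpow]; simp
      omega
    have hfalse : false ∈ w := by
      by_contra hmem
      have hall : ∀ x ∈ w, x = true := by
        intro x hx
        cases x
        · exact absurd hx hmem
        · rfl
      have hrep : w = List.replicate w.length true := List.eq_replicate_length.2 hall
      rw [hrep, wprod_replicate_true] at hw
      have : N.1 1 0 = 0 := by rw [← hw, Lpow]; simp
      omega
    obtain ⟨p, s, hps⟩ := List.append_of_mem hfalse
    have htz : true ∈ s ++ p := by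
      rw [hps] at htrue
      rcases List.mem_append.1 htrue with h' | h'
      · exact List.mem_append.2 (Or.inr h')
      · rcases List.mem_cons.1 h' with h'' | h''
        · simp at h''
        · exact List.mem_append.2 (Or.inl h'')
    obtain ⟨q, r, hz, hq⟩ := first_true (s ++ p) htz
    have hqrep : q = List.replicate q.length false := List.eq_replicate_length.2 hq
    have conj0 : IsConjTo M (wprod w) := by rw [hw]; exact hconj
    have conj1 : IsConjTo M (wprod ((false :: s) ++ p)) := by
      refine isConjTo_trans conj0 ?_
      rw [hps]
      exact isConjTo_rot p (false :: s)
    have hsplit : (false :: s) ++ p = (false :: q) ++ (true :: r) := by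
      simp [hz]
    have conj2 : IsConjTo M (wprod ((true :: r) ++ (false :: q))) := by
      refine isConjTo_trans conj1 ?_
      rw [hsplit]
      exact isConjTo_rot (false :: q) (true :: r)
    have hWeq : (true :: r) ++ (false :: q)
        = (true :: (r ++ List.replicate q.length false)) ++ [false] := by
      conv_lhs => rw [hqrep]
      rw [show (false :: List.replicate q.length false)
            = List.replicate (q.length+1) false from rfl,
        List.replicate_succ']
      simp
    rw [hWeq] at conj2
    obtain ⟨k, a, b, hbpos, hapos, hhead, hwp⟩ :=
      runs (true :: (r ++ List.replicate q.length false))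
    obtain ⟨C, hC⟩ := conj2
    refine ⟨C, k+1, by omega, a, b, ?_, hbpos, ?_⟩
    · intro i
      rcases eq_or_ne i 0 with rfl | hi
      · exact hhead ((r ++ List.replicate q.length false) ++ [false]) (by simp)
      · exact hapos i hi
    · rw [hC, hwp]
  · rintro ⟨C, k, hk, a, b, ha, hb, hce⟩
    have hne : (List.ofFn fun i => Lmat ^ a i * Rmat ^ b i) ≠ [] := by
      intro h
      have := congrArg List.length h
      simp at this
      omega
    have hP : PosM ((List.ofFn fun i => Lmat ^ a i * Rmat ^ b i).prod) := by
      refine posM_prod _ hne ?_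
      intro x hx
      obtain ⟨i, hi⟩ := List.mem_ofFn.1 hx
      exact hi ▸ posM_block (a i) (b i) (ha i) (hb i)
    have htc := trace_conj C M
    rw [hce] at htc
    obtain ⟨h1, h2, h3, h4⟩ := hP
    have : (2:ℤ) < M.1 0 0 + M.1 1 1 := by omega
    simpa [Matrix.trace_fin_two] using this
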